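/- Let X be a (G,H)-equivalence of locally compact Hausdorff groupoids. Then the map X ×_σ,σ X^op → G sending (x,y) with σ(x)=σ(y) to the unique element g ∈ G with g·y = x is continuous, open, and surjective, and it descends to an isomorphism of topological groupoids X ×_H X^op ≅ G. -/

import Mathlib

/- Statement 5: For a (G, H)-equivalence X, the map X ×_σ,σ X^op → G, (x, y) ↦ the unique
g with g·y = x, is continuous, open and surjective, and descends to an isomorphism of
topological groupoids X ×_H X^op ≅ G. -/

/-- A topological groupoid: a topological space `G` with source and range maps (valued in the
units, viewed inside `G`), a partially defined multiplication, and inversion, all continuous. -/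
structure TopGroupoid (G : Type*) [TopologicalSpace G] : Type _ where
  src : G → G
  rng : G → G
  mul : (g h : G) → src g = rng h → G
  inv : G → G
  rng_src : ∀ g, rng (src g) = src g
  src_src : ∀ g, src (src g) = src g
  src_rng : ∀ g, src (rng g) = rng g
  rng_rng : ∀ g, rng (rng g) = rng g
  src_mul : ∀ g h hgh, src (mul g h hgh) = src h
  rng_mul : ∀ g h hgh, rng (mul g h hgh) = rng g
  mul_assoc : ∀ g h k (hgh : src g = rng h) (hhk : src h = rng k)
    (h₁ : src (mul g h hgh) = rng k) (h₂ : src g = rng (mul h k hhk)),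
    mul (mul g h hgh) k h₁ = mul g (mul h k hhk) h₂
  src_inv : ∀ g, src (inv g) = rng g
  rng_inv : ∀ g, rng (inv g) = src g
  mul_inv : ∀ g (h : src g = rng (inv g)), mul g (inv g) h = rng g
  inv_mul : ∀ g (h : src (inv g) = rng g), mul (inv g) g h = src g
  mul_src : ∀ g (h : src g = rng (src g)), mul g (src g) h = g
  rng_mul' : ∀ g (h : src (rng g) = rng g), mul (rng g) g h = g
  continuous_src : Continuous src
  continuous_rng : Continuous rng
  continuous_inv : Continuous inv
  continuous_mul : Continuous (fun p : {p : G × G // src p.1 = rng p.2} =>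
    mul p.1.1 p.1.2 p.2)

namespace TopGroupoid

variable {G : Type*} [TopologicalSpace G] (𝒢 : TopGroupoid G)

/-- The unit space of the groupoid, viewed as a subset of `G`. -/
def units : Set G := Set.range 𝒢.rng

/-- The source map is open (onto the unit space, with its subspace topology). -/
def OpenSource : Prop :=
  ∀ U : Set G, IsOpen U → ∃ V : Set G, IsOpen V ∧ 𝒢.src '' U = V ∩ 𝒢.units

end TopGroupoid

/-- A continuous right action of a topological groupoid `H` on a topological space `X`,
along an anchor map `σ : X → H` (valued in the units of `H`). -/
structure RightGroupoidAction {H : Type*} [TopologicalSpace H] (𝒢 : TopGroupoid H)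
    (X : Type*) [TopologicalSpace X] : Type _ where
  anchor : X → H
  anchor_unit : ∀ x, 𝒢.rng (anchor x) = anchor x
  continuous_anchor : Continuous anchor
  act : (x : X) → (h : H) → anchor x = 𝒢.rng h → X
  anchor_act : ∀ x h hc, anchor (act x h hc) = 𝒢.src h
  act_unit : ∀ x (hc : anchor x = 𝒢.rng (anchor x)), act x (anchor x) hc = x
  act_mul : ∀ x h h' (hc : anchor x = 𝒢.rng h) (hc' : anchor (act x h hc) = 𝒢.rng h')
    (hhh : 𝒢.src h = 𝒢.rng h') (hc'' : anchor x = 𝒢.rng (𝒢.mul h h' hhh)),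
    act (act x h hc) h' hc' = act x (𝒢.mul h h' hhh) hc''
  continuous_act : Continuous (fun p : {p : X × H // anchor p.1 = 𝒢.rng p.2} =>
    act p.1.1 p.1.2 p.2)

namespace RightGroupoidAction

variable {H : Type*} [TopologicalSpace H] {𝒢 : TopGroupoid H}
  {X : Type*} [TopologicalSpace X] (ρ : RightGroupoidAction 𝒢 X)

/-- The action is free: only units act trivially. -/
def IsFree : Prop := ∀ x h hc, ρ.act x h hc = x → h = ρ.anchor x

/-- The action is proper: `(x, h) ↦ (x, x·h)` is a proper map. -/
def IsProper : Prop :=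
  IsProperMap (fun p : {p : X × H // ρ.anchor p.1 = 𝒢.rng p.2} =>
    ((p.1.1, ρ.act p.1.1 p.1.2 p.2) : X × X))

/-- The anchor map is open onto the unit space. -/
def OpenAnchor : Prop :=
  ∀ U : Set X, IsOpen U → ∃ V : Set H, IsOpen V ∧ ρ.anchor '' U = V ∩ 𝒢.units

/-- The anchor map is surjective onto the unit space. -/
def SurjAnchor : Prop := ∀ u ∈ 𝒢.units, ∃ x, ρ.anchor x = u

/-- `X` is a principal (free and proper) right `H`-space. -/
def IsPrincipal : Prop := ρ.IsFree ∧ ρ.IsProper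

/-- Two points of the fibred product `X ×_{σ,σ} X` are equivalent when they differ by the
diagonal action of `H`. -/
def diagRel (p q : {p : X × X // ρ.anchor p.1 = ρ.anchor p.2}) : Prop :=
  ∃ (h : H) (hc₁ : ρ.anchor p.1.1 = 𝒢.rng h) (hc₂ : ρ.anchor p.1.2 = 𝒢.rng h),
    q.1.1 = ρ.act p.1.1 h hc₁ ∧ q.1.2 = ρ.act p.1.2 h hc₂

end RightGroupoidAction

/-- A continuous left action of a topological groupoid. -/
structure LeftGroupoidAction {G : Type*} [TopologicalSpace G] (𝒢 : TopGroupoid G)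
    (X : Type*) [TopologicalSpace X] : Type _ where
  anchor : X → G
  anchor_unit : ∀ x, 𝒢.rng (anchor x) = anchor x
  continuous_anchor : Continuous anchor
  act : (g : G) → (x : X) → 𝒢.src g = anchor x → X
  anchor_act : ∀ g x hc, anchor (act g x hc) = 𝒢.rng g
  act_unit : ∀ x (hc : 𝒢.src (anchor x) = anchor x), act (anchor x) x hc = x
  act_mul : ∀ g g' x (hc : 𝒢.src g' = anchor x) (hc' : 𝒢.src g = anchor (act g' x hc))
    (hgg : 𝒢.src g = 𝒢.rng g') (hc'' : 𝒢.src (𝒢.mul g g' hgg) = anchor x),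
    act g (act g' x hc) hc' = act (𝒢.mul g g' hgg) x hc''
  continuous_act : Continuous (fun p : {p : G × X // 𝒢.src p.1 = anchor p.2} =>
    act p.1.1 p.1.2 p.2)

namespace LeftGroupoidAction

variable {G : Type*} [TopologicalSpace G] {𝒢 : TopGroupoid G}
  {X : Type*} [TopologicalSpace X] (lam : LeftGroupoidAction 𝒢 X)

def IsFree : Prop := ∀ g x hc, lam.act g x hc = x → g = lam.anchor x

def IsProper : Prop :=
  IsProperMap (fun p : {p : G × X // 𝒢.src p.1 = lam.anchor p.2} =>
    ((lam.act p.1.1 p.1.2 p.2, p.1.2) : X × X))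

def OpenAnchor : Prop :=
  ∀ U : Set X, IsOpen U → ∃ V : Set G, IsOpen V ∧ lam.anchor '' U = V ∩ 𝒢.units

def SurjAnchor : Prop := ∀ u ∈ 𝒢.units, ∃ x, lam.anchor x = u

def IsPrincipal : Prop := lam.IsFree ∧ lam.IsProper

end LeftGroupoidAction

/-- A `(G, H)`-groupoid equivalence: commuting principal left `G`- and right `H`-actions on
`X` whose anchor maps are open surjections onto the unit spaces and identify `X/H` with `G⁰`
and `G\X` with `H⁰` (encoded: the fibres of each anchor map are exactly the orbits of the
other action). -/
structure GroupoidEquivalence {G H : Type*} [TopologicalSpace G] [TopologicalSpace H]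
    (𝒢 : TopGroupoid G) (ℋ : TopGroupoid H) (X : Type*) [TopologicalSpace X] : Type _ where
  lact : LeftGroupoidAction 𝒢 X
  ract : RightGroupoidAction ℋ X
  commute : ∀ g x h (hcl : 𝒢.src g = lact.anchor x) (hcr : ract.anchor x = ℋ.rng h)
    (hcr' : ract.anchor (lact.act g x hcl) = ℋ.rng h)
    (hcl' : 𝒢.src g = lact.anchor (ract.act x h hcr)),
    ract.act (lact.act g x hcl) h hcr' = lact.act g (ract.act x h hcr) hcl'
  lact_principal : lact.IsPrincipal
  ract_principal : ract.IsPrincipal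
  lact_openAnchor : lact.OpenAnchor
  ract_openAnchor : ract.OpenAnchor
  lact_surjAnchor : lact.SurjAnchor
  ract_surjAnchor : ract.SurjAnchor
  /-- the right anchor `σ` is invariant under the left action and its fibres are the
  `G`-orbits -/
  ract_anchor_lact : ∀ g x hc, ract.anchor (lact.act g x hc) = ract.anchor x
  ract_anchor_eq_iff : ∀ x y, ract.anchor x = ract.anchor y ↔
    ∃ g hc, lact.act g y hc = x
  /-- the left anchor `ρ` is invariant under the right action and its fibres are the
  `H`-orbits -/
  lact_anchor_ract : ∀ x h hc, lact.anchor (ract.act x h hc) = lact.anchor x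
  lact_anchor_eq_iff : ∀ x y, lact.anchor x = lact.anchor y ↔
    ∃ h hc, ract.act y h hc = x


section LeoqAux

variable {G H X : Type*} [TopologicalSpace G] [TopologicalSpace H] [TopologicalSpace X]

/-- Congruence for groupoid multiplication, transporting the compatibility proof. -/
theorem TopGroupoid.mulCongr (𝒢 : TopGroupoid G) {g g' h h' : G} (eg : g = g') (eh : h = h')
    (hc : 𝒢.src g = 𝒢.rng h) (hc' : 𝒢.src g' = 𝒢.rng h') :
    𝒢.mul g h hc = 𝒢.mul g' h' hc' := by subst eg; subst eh; rfl

/-- Congruence for a left groupoid action, transporting the compatibility proof. -/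
theorem LeftGroupoidAction.actCongr {𝒢 : TopGroupoid G} (lam : LeftGroupoidAction 𝒢 X)
    {g g' : G} {x x' : X} (eg : g = g') (ex : x = x')
    (hc : 𝒢.src g = lam.anchor x) (hc' : 𝒢.src g' = lam.anchor x') :
    lam.act g x hc = lam.act g' x' hc' := by subst eg; subst ex; rfl

/-- Congruence for a right groupoid action, transporting the compatibility proof. -/
theorem RightGroupoidAction.actCongr {ℋ : TopGroupoid H} (ram : RightGroupoidAction ℋ X)
    {x x' : X} {h h' : H} (ex : x = x') (eh : h = h')
    (hc : ram.anchor x = ℋ.rng h) (hc' : ram.anchor x' = ℋ.rng h') :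
    ram.act x h hc = ram.act x' h' hc' := by subst ex; subst eh; rfl

/-- The anchor of a left action is fixed by the source map. -/
theorem LeftGroupoidAction.srcAnchor {𝒢 : TopGroupoid G} (lam : LeftGroupoidAction 𝒢 X)
    (x : X) : 𝒢.src (lam.anchor x) = lam.anchor x := by
  have h := 𝒢.src_rng (lam.anchor x)
  rwa [lam.anchor_unit] at h

/-- Freeness of the left action of an equivalence gives uniqueness of the translating
element. -/
theorem GroupoidEquivalence.lact_uniq {𝒢 : TopGroupoid G} {ℋ : TopGroupoid H}
    (Eqv : GroupoidEquivalence 𝒢 ℋ X) {g g' : G} {y : X}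
    (hc : 𝒢.src g = Eqv.lact.anchor y) (hc' : 𝒢.src g' = Eqv.lact.anchor y)
    (he : Eqv.lact.act g y hc = Eqv.lact.act g' y hc') : g = g' := by
  have hr : 𝒢.rng g = 𝒢.rng g' := by
    have h1 := Eqv.lact.anchor_act g y hc
    have h2 := Eqv.lact.anchor_act g' y hc'
    rw [he] at h1
    exact (h2.symm.trans h1).symm
  have hinv : 𝒢.src (𝒢.inv g') = 𝒢.rng g := by rw [𝒢.src_inv, hr]
  have hca : 𝒢.src (𝒢.inv g') = Eqv.lact.anchor (Eqv.lact.act g y hc) := by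
    rw [𝒢.src_inv, Eqv.lact.anchor_act]; exact hr.symm
  have hcm : 𝒢.src (𝒢.mul (𝒢.inv g') g hinv) = Eqv.lact.anchor y := by
    rw [𝒢.src_mul]; exact hc
  have step1 := Eqv.lact.act_mul (𝒢.inv g') g y hc hca hinv hcm
  have hinv' : 𝒢.src (𝒢.inv g') = 𝒢.rng g' := 𝒢.src_inv g'
  have hca' : 𝒢.src (𝒢.inv g') = Eqv.lact.anchor (Eqv.lact.act g' y hc') := by
    rw [𝒢.src_inv, Eqv.lact.anchor_act]
  have hcm' : 𝒢.src (𝒢.mul (𝒢.inv g') g' hinv') = Eqv.lact.anchor y := by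
    rw [𝒢.src_mul]; exact hc'
  have step2 := Eqv.lact.act_mul (𝒢.inv g') g' y hc' hca' hinv' hcm'
  have hmul' : 𝒢.mul (𝒢.inv g') g' hinv' = Eqv.lact.anchor y :=
    (𝒢.inv_mul g' hinv').trans hc'
  have hu : 𝒢.src (Eqv.lact.anchor y) = Eqv.lact.anchor y := Eqv.lact.srcAnchor y
  have key0 : Eqv.lact.act (𝒢.mul (𝒢.inv g') g hinv) y hcm = y := by
    rw [← step1]
    calc Eqv.lact.act (𝒢.inv g') (Eqv.lact.act g y hc) hca
        = Eqv.lact.act (𝒢.inv g') (Eqv.lact.act g' y hc') hca' :=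
          Eqv.lact.actCongr rfl he _ _
      _ = Eqv.lact.act (𝒢.mul (𝒢.inv g') g' hinv') y hcm' := step2
      _ = Eqv.lact.act (Eqv.lact.anchor y) y hu := Eqv.lact.actCongr hmul' rfl _ _
      _ = y := Eqv.lact.act_unit y hu
  have key : 𝒢.mul (𝒢.inv g') g hinv = Eqv.lact.anchor y :=
    Eqv.lact_principal.1 _ y hcm key0
  have hgi : 𝒢.src g' = 𝒢.rng (𝒢.inv g') := (𝒢.rng_inv g').symm
  have h1 : 𝒢.src (𝒢.mul g' (𝒢.inv g') hgi) = 𝒢.rng g := by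
    rw [𝒢.src_mul, 𝒢.src_inv, hr]
  have h2 : 𝒢.src g' = 𝒢.rng (𝒢.mul (𝒢.inv g') g hinv) := by
    rw [𝒢.rng_mul, 𝒢.rng_inv]
  have assoc := 𝒢.mul_assoc g' (𝒢.inv g') g hgi hinv h1 h2
  have hc2 : 𝒢.src (𝒢.rng g) = 𝒢.rng g := 𝒢.src_rng g
  have lhs : 𝒢.mul (𝒢.mul g' (𝒢.inv g') hgi) g h1 = g := by
    rw [𝒢.mulCongr ((𝒢.mul_inv g' hgi).trans hr.symm) rfl h1 hc2]
    exact 𝒢.rng_mul' g hc2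
  have hc3 : 𝒢.src g' = 𝒢.rng (𝒢.src g') := (𝒢.rng_src g').symm
  have rhs : 𝒢.mul g' (𝒢.mul (𝒢.inv g') g hinv) h2 = g' := by
    rw [𝒢.mulCongr rfl (key.trans hc'.symm) h2 hc3]
    exact 𝒢.mul_src g' hc3
  exact lhs.symm.trans (assoc.trans rhs)

end LeoqAux

/-- **Remark 1.1** (`rmk:leoq`): the canonical map `(x, y) ↦ _G⟨x, y⟩` of a groupoid
equivalence is a continuous open surjection which descends to an isomorphism
`X ×_H X^op ≅ G` of topological groupoids. -/
theorem leoq_isomorphism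
    {G H X : Type*} [TopologicalSpace G] [TopologicalSpace H] [TopologicalSpace X]
    [LocallyCompactSpace G] [T2Space G] [LocallyCompactSpace H] [T2Space H]
    [LocallyCompactSpace X] [T2Space X]
    (𝒢 : TopGroupoid G) (ℋ : TopGroupoid H)
    (Eqv : GroupoidEquivalence 𝒢 ℋ X)
    -- Φ x y is the unique g ∈ G with g·y = x (for σ(x) = σ(y))
    (Φ : (x y : X) → Eqv.ract.anchor x = Eqv.ract.anchor y → G)
    (hΦs : ∀ x y h, 𝒢.src (Φ x y h) = Eqv.lact.anchor y)
    (hΦact : ∀ x y h, Eqv.lact.act (Φ x y h) y (hΦs x y h) = x) :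
    -- the map is continuous, open and surjective …
    Continuous (fun p : {p : X × X // Eqv.ract.anchor p.1 = Eqv.ract.anchor p.2} =>
      Φ p.1.1 p.1.2 p.2) ∧
    IsOpenMap (fun p : {p : X × X // Eqv.ract.anchor p.1 = Eqv.ract.anchor p.2} =>
      Φ p.1.1 p.1.2 p.2) ∧
    Function.Surjective
      (fun p : {p : X × X // Eqv.ract.anchor p.1 = Eqv.ract.anchor p.2} =>
        Φ p.1.1 p.1.2 p.2) ∧
    -- … and descends to an isomorphism of topological groupoids X ×_H X^op ≅ G:
    -- its fibres are exactly the diagonal H-orbits,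
    (∀ p q : {p : X × X // Eqv.ract.anchor p.1 = Eqv.ract.anchor p.2},
      Φ p.1.1 p.1.2 p.2 = Φ q.1.1 q.1.2 q.2 ↔ Eqv.ract.diagRel p q) ∧
    -- it intertwines the imprimitivity groupoid structure with that of G:
    (∀ (x y z : X) (hxy : Eqv.ract.anchor x = Eqv.ract.anchor y)
      (hyz : Eqv.ract.anchor y = Eqv.ract.anchor z)
      (hc : 𝒢.src (Φ x y hxy) = 𝒢.rng (Φ y z hyz)),
      𝒢.mul (Φ x y hxy) (Φ y z hyz) hc = Φ x z (hxy.trans hyz)) ∧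
    (∀ (x y : X) (hxy : Eqv.ract.anchor x = Eqv.ract.anchor y),
      𝒢.inv (Φ x y hxy) = Φ y x hxy.symm) ∧
    (∀ x : X, Φ x x rfl = Eqv.lact.anchor x) := by
  have hΦuniq : ∀ (x y : X) (hxy : Eqv.ract.anchor x = Eqv.ract.anchor y) (g : G)
      (hc : 𝒢.src g = Eqv.lact.anchor y), Eqv.lact.act g y hc = x → Φ x y hxy = g :=
    fun x y hxy g hc he =>
      Eqv.lact_uniq (hΦs x y hxy) hc ((hΦact x y hxy).trans he.symm)
  -- the corestricted map (g, x) ↦ (g·x, x)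
  let Fhat : {p : G × X // 𝒢.src p.1 = Eqv.lact.anchor p.2} →
      {p : X × X // Eqv.ract.anchor p.1 = Eqv.ract.anchor p.2} :=
    fun p => ⟨(Eqv.lact.act p.1.1 p.1.2 p.2, p.1.2), Eqv.ract_anchor_lact p.1.1 p.1.2 p.2⟩
  have hFcont : Continuous Fhat :=
    Continuous.subtype_mk Eqv.lact_principal.2.continuous _
  have hFclosedXX : IsClosedMap (fun p : {p : G × X // 𝒢.src p.1 = Eqv.lact.anchor p.2} =>
      ((Eqv.lact.act p.1.1 p.1.2 p.2, p.1.2) : X × X)) :=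
    Eqv.lact_principal.2.isClosedMap
  have hFinj : Function.Injective Fhat := by
    rintro ⟨⟨g, x⟩, hp⟩ ⟨⟨g', x'⟩, hq⟩ h
    have h1 : Eqv.lact.act g x hp = Eqv.lact.act g' x' hq := congrArg (fun q => q.1.1) h
    have h2 : x = x' := congrArg (fun q => q.1.2) h
    subst h2
    have h3 : g = g' := Eqv.lact_uniq hp hq h1
    subst h3; rfl
  have hFsurj : Function.Surjective Fhat := by
    rintro ⟨⟨a, b⟩, hab⟩
    obtain ⟨g, hc, hg⟩ := (Eqv.ract_anchor_eq_iff a b).mp hab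
    refine ⟨⟨(g, b), hc⟩, ?_⟩
    apply Subtype.ext
    show (Eqv.lact.act g b hc, b) = (a, b)
    rw [hg]
  have hFclosed : IsClosedMap Fhat := by
    intro C hC
    have h1 : Fhat '' C = Subtype.val ⁻¹'
        ((fun p : {p : G × X // 𝒢.src p.1 = Eqv.lact.anchor p.2} =>
          ((Eqv.lact.act p.1.1 p.1.2 p.2, p.1.2) : X × X)) '' C) := by
      ext q
      simp only [Set.mem_image, Set.mem_preimage]
      constructor
      · rintro ⟨p, hp, rfl⟩; exact ⟨p, hp, rfl⟩
      · rintro ⟨p, hp, hq⟩; exact ⟨p, hp, Subtype.ext hq⟩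
    rw [h1]
    exact (hFclosedXX C hC).preimage continuous_subtype_val
  have hFopen : IsOpenMap Fhat := by
    intro U hU
    have h1 : Fhat '' Uᶜᶜ = (Fhat '' Uᶜ)ᶜ := Set.image_compl_eq ⟨hFinj, hFsurj⟩
    rw [compl_compl] at h1
    rw [h1]
    exact (hFclosed Uᶜ hU.isClosed_compl).isOpen_compl
  let e := Equiv.ofBijective Fhat ⟨hFinj, hFsurj⟩
  let homeo := Equiv.toHomeomorphOfContinuousOpen e hFcont hFopen
  have hcomp' : ∀ p, Φ (Fhat p).1.1 (Fhat p).1.2 (Fhat p).2 = p.1.1 := fun p =>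
    hΦuniq _ _ _ p.1.1 p.2 rfl
  have hfun : (fun q : {p : X × X // Eqv.ract.anchor p.1 = Eqv.ract.anchor p.2} =>
        Φ q.1.1 q.1.2 q.2)
      = (fun p : {p : G × X // 𝒢.src p.1 = Eqv.lact.anchor p.2} => p.1.1) ∘ ⇑homeo.symm := by
    funext q
    obtain ⟨p, rfl⟩ := hFsurj q
    have h3 : homeo.symm (Fhat p) = p := homeo.symm_apply_apply p
    show Φ (Fhat p).1.1 (Fhat p).1.2 (Fhat p).2 = (homeo.symm (Fhat p)).1.1
    rw [h3]
    exact hcomp' p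
  have hπopen : IsOpenMap (fun p : {p : G × X // 𝒢.src p.1 = Eqv.lact.anchor p.2} => p.1.1) := by
    intro O hO
    rw [isOpen_iff_forall_mem_open]
    rintro g ⟨⟨⟨g₀, x₀⟩, hp⟩, hpO, rfl⟩
    obtain ⟨O', hO', hOeq⟩ := isOpen_induced_iff.mp hO
    have hmem : ((g₀, x₀) : G × X) ∈ O' := by rw [← hOeq] at hpO; exact hpO
    obtain ⟨U, V, hU, hV, hgU, hxV, hUV⟩ := isOpen_prod_iff.mp hO' g₀ x₀ hmem
    obtain ⟨W, hW, hWeq⟩ := Eqv.lact_openAnchor V hV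
    refine ⟨U ∩ 𝒢.src ⁻¹' W, ?_, hU.inter (hW.preimage 𝒢.continuous_src), hgU, ?_⟩
    · rintro g ⟨hgU', hgW⟩
      have hWmem : 𝒢.src g ∈ Eqv.lact.anchor '' V := by
        rw [hWeq]; exact ⟨hgW, ⟨𝒢.src g, 𝒢.rng_src g⟩⟩
      obtain ⟨x, hxV', hρx⟩ := hWmem
      refine ⟨⟨(g, x), hρx.symm⟩, ?_, rfl⟩
      rw [← hOeq]
      exact hUV ⟨hgU', hxV'⟩
    · show 𝒢.src g₀ ∈ W
      have hW0 : Eqv.lact.anchor x₀ ∈ W ∩ 𝒢.units := by rw [← hWeq]; exact ⟨x₀, hxV, rfl⟩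
      rw [hp]
      exact hW0.1
  refine ⟨?_, ?_, ?_, ?_, ?_, ?_, ?_⟩
  · rw [hfun]
    exact (continuous_fst.comp continuous_subtype_val).comp homeo.symm.continuous
  · rw [hfun]
    exact hπopen.comp homeo.symm.isOpenMap
  · intro g
    obtain ⟨x, hx⟩ := Eqv.lact_surjAnchor (𝒢.src g) ⟨𝒢.src g, 𝒢.rng_src g⟩
    exact ⟨⟨(Eqv.lact.act g x hx.symm, x), Eqv.ract_anchor_lact g x hx.symm⟩,
      hΦuniq _ _ _ g hx.symm rfl⟩
  · rintro ⟨⟨x₁, x₂⟩, hp⟩ ⟨⟨y₁, y₂⟩, hq⟩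
    constructor
    · intro hpq
      have hρ : Eqv.lact.anchor x₂ = Eqv.lact.anchor y₂ := by
        rw [← hΦs x₁ x₂ hp, ← hΦs y₁ y₂ hq, hpq]
      obtain ⟨h, hch, hh⟩ := (Eqv.lact_anchor_eq_iff y₂ x₂).mp hρ.symm
      refine ⟨h, hp.trans hch, hch, ?_, hh.symm⟩
      have hcl : 𝒢.src (Φ x₁ x₂ hp) = Eqv.lact.anchor x₂ := hΦs x₁ x₂ hp
      have hcr' : Eqv.ract.anchor (Eqv.lact.act (Φ x₁ x₂ hp) x₂ hcl) = ℋ.rng h := by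
        rw [Eqv.ract_anchor_lact]; exact hch
      have hcl' : 𝒢.src (Φ x₁ x₂ hp) = Eqv.lact.anchor (Eqv.ract.act x₂ h hch) := by
        rw [Eqv.lact_anchor_ract]; exact hcl
      calc y₁ = Eqv.lact.act (Φ y₁ y₂ hq) y₂ (hΦs y₁ y₂ hq) := (hΦact y₁ y₂ hq).symm
        _ = Eqv.lact.act (Φ x₁ x₂ hp) (Eqv.ract.act x₂ h hch) hcl' :=
          Eqv.lact.actCongr hpq.symm hh.symm _ _
        _ = Eqv.ract.act (Eqv.lact.act (Φ x₁ x₂ hp) x₂ hcl) h hcr' :=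
          (Eqv.commute _ x₂ h hcl hch hcr' hcl').symm
        _ = Eqv.ract.act x₁ h (hp.trans hch) :=
          Eqv.ract.actCongr (hΦact x₁ x₂ hp) rfl _ _
    · rintro ⟨h, hc₁, hc₂, hq1, hq2⟩
      have hq1' : y₁ = Eqv.ract.act x₁ h hc₁ := hq1
      have hq2' : y₂ = Eqv.ract.act x₂ h hc₂ := hq2
      have hcl : 𝒢.src (Φ x₁ x₂ hp) = Eqv.lact.anchor x₂ := hΦs x₁ x₂ hp
      have hcl'' : 𝒢.src (Φ x₁ x₂ hp) = Eqv.lact.anchor (Eqv.ract.act x₂ h hc₂) := by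
        rw [Eqv.lact_anchor_ract]; exact hcl
      have hcl' : 𝒢.src (Φ x₁ x₂ hp) = Eqv.lact.anchor y₂ := by
        rw [hq2']; exact hcl''
      have hcr' : Eqv.ract.anchor (Eqv.lact.act (Φ x₁ x₂ hp) x₂ hcl) = ℋ.rng h := by
        rw [Eqv.ract_anchor_lact]; exact hc₂
      have he : Eqv.lact.act (Φ x₁ x₂ hp) y₂ hcl' = y₁ := by
        calc Eqv.lact.act (Φ x₁ x₂ hp) y₂ hcl'
            = Eqv.lact.act (Φ x₁ x₂ hp) (Eqv.ract.act x₂ h hc₂) hcl'' :=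
              Eqv.lact.actCongr rfl hq2' _ _
          _ = Eqv.ract.act (Eqv.lact.act (Φ x₁ x₂ hp) x₂ hcl) h hcr' :=
              (Eqv.commute _ x₂ h hcl hc₂ hcr' hcl'').symm
          _ = Eqv.ract.act x₁ h hc₁ := Eqv.ract.actCongr (hΦact x₁ x₂ hp) rfl _ _
          _ = y₁ := hq1'.symm
      exact (hΦuniq y₁ y₂ hq _ hcl' he).symm
  · intro x y z hxy hyz hc
    have h2 : Eqv.lact.act (Φ y z hyz) z (hΦs y z hyz) = y := hΦact y z hyz
    have hc' : 𝒢.src (Φ x y hxy)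
        = Eqv.lact.anchor (Eqv.lact.act (Φ y z hyz) z (hΦs y z hyz)) := by
      rw [h2]; exact hΦs x y hxy
    have hcm : 𝒢.src (𝒢.mul (Φ x y hxy) (Φ y z hyz) hc) = Eqv.lact.anchor z := by
      rw [𝒢.src_mul]; exact hΦs y z hyz
    have hmm := Eqv.lact.act_mul (Φ x y hxy) (Φ y z hyz) z (hΦs y z hyz) hc' hc hcm
    have he : Eqv.lact.act (𝒢.mul (Φ x y hxy) (Φ y z hyz) hc) z hcm = x := by
      rw [← hmm]
      calc Eqv.lact.act (Φ x y hxy) (Eqv.lact.act (Φ y z hyz) z (hΦs y z hyz)) hc'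
          = Eqv.lact.act (Φ x y hxy) y (hΦs x y hxy) := Eqv.lact.actCongr rfl h2 _ _
        _ = x := hΦact x y hxy
    exact (hΦuniq x z (hxy.trans hyz) _ hcm he).symm
  · intro x y hxy
    have h1 : Eqv.lact.act (Φ x y hxy) y (hΦs x y hxy) = x := hΦact x y hxy
    have hrg : 𝒢.rng (Φ x y hxy) = Eqv.lact.anchor x :=
      (Eqv.lact.anchor_act (Φ x y hxy) y (hΦs x y hxy)).symm.trans
        (congrArg Eqv.lact.anchor h1)
    have hci : 𝒢.src (𝒢.inv (Φ x y hxy)) = Eqv.lact.anchor x := by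
      rw [𝒢.src_inv]; exact hrg
    have hci' : 𝒢.src (𝒢.inv (Φ x y hxy))
        = Eqv.lact.anchor (Eqv.lact.act (Φ x y hxy) y (hΦs x y hxy)) := by
      rw [h1]; exact hci
    have hgg : 𝒢.src (𝒢.inv (Φ x y hxy)) = 𝒢.rng (Φ x y hxy) := 𝒢.src_inv _
    have hcm : 𝒢.src (𝒢.mul (𝒢.inv (Φ x y hxy)) (Φ x y hxy) hgg) = Eqv.lact.anchor y := by
      rw [𝒢.src_mul]; exact hΦs x y hxy
    have hu : 𝒢.src (Eqv.lact.anchor y) = Eqv.lact.anchor y := Eqv.lact.srcAnchor y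
    have he : Eqv.lact.act (𝒢.inv (Φ x y hxy)) x hci = y := by
      calc Eqv.lact.act (𝒢.inv (Φ x y hxy)) x hci
          = Eqv.lact.act (𝒢.inv (Φ x y hxy))
              (Eqv.lact.act (Φ x y hxy) y (hΦs x y hxy)) hci' :=
            Eqv.lact.actCongr rfl h1.symm _ _
        _ = Eqv.lact.act (𝒢.mul (𝒢.inv (Φ x y hxy)) (Φ x y hxy) hgg) y hcm :=
            Eqv.lact.act_mul _ _ _ _ hci' hgg hcm
        _ = Eqv.lact.act (Eqv.lact.anchor y) y hu :=
            Eqv.lact.actCongr ((𝒢.inv_mul _ hgg).trans (hΦs x y hxy)) rfl _ _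
        _ = y := Eqv.lact.act_unit y hu
    exact (hΦuniq y x hxy.symm _ hci he).symm
  · intro x
    have hu : 𝒢.src (Eqv.lact.anchor x) = Eqv.lact.anchor x := Eqv.lact.srcAnchor x
    exact hΦuniq x x rfl (Eqv.lact.anchor x) hu (Eqv.lact.act_unit x hu)
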